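/- The function -A, where A(θ) = (θ cos(θ/2) - 2 sin(θ/2))/(θ - sin θ), is positive and strictly increasing on (0, 2π); moreover the function B(θ) = (1 - cos θ)/(θ - sin θ) is positive and strictly decreasing on (0, 2π). -/

import Mathlib

open Real Set

private lemma sin_half_pos {θ : ℝ} (h : θ ∈ Set.Ioo 0 (2*π)) : 0 < Real.sin (θ/2) :=
  Real.sin_pos_of_pos_of_lt_pi (by linarith [h.1]) (by linarith [h.2])

private lemma hasDerivAt_N (x : ℝ) :
    HasDerivAt (fun y : ℝ => y * Real.cos (y/2) - 2 * Real.sin (y/2))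
      (-(x/2) * Real.sin (x/2)) x := by
  have h2 : HasDerivAt (fun y : ℝ => y/2) (1/2) x := (hasDerivAt_id x).div_const 2
  have hc : HasDerivAt (fun y : ℝ => Real.cos (y/2)) (-Real.sin (x/2) * (1/2)) x :=
    by have := (Real.hasDerivAt_cos (x/2)).comp x h2; exact this
  have hs' : HasDerivAt (fun y : ℝ => Real.sin (y/2)) (Real.cos (x/2) * (1/2)) x :=
    by have := (Real.hasDerivAt_sin (x/2)).comp x h2; exact this
  have := ((hasDerivAt_id x).mul hc).sub (hs'.const_mul 2)
  refine this.congr_deriv ?_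
  simp [Real.sin_sq_add_cos_sq]
  ring

private lemma N_neg {θ : ℝ} (h : θ ∈ Set.Ioo 0 (2*π)) :
    θ * Real.cos (θ/2) - 2 * Real.sin (θ/2) < 0 := by
  have pi_pos := Real.pi_pos
  have anti : StrictAntiOn (fun y : ℝ => y * Real.cos (y/2) - 2 * Real.sin (y/2))
      (Set.Icc 0 (2*π)) := by
    apply strictAntiOn_of_deriv_neg (convex_Icc _ _)
    · fun_prop
    · intro x hx
      rw [interior_Icc] at hx
      rw [(hasDerivAt_N x).deriv]
      have hs := sin_half_pos hx
      nlinarith [hx.1]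
  have h0 : (0:ℝ) ∈ Set.Icc 0 (2*π) := left_mem_Icc.mpr (by linarith)
  have hθ : θ ∈ Set.Icc 0 (2*π) := ⟨le_of_lt h.1, le_of_lt h.2⟩
  have := anti h0 hθ h.1
  simpa using this

private lemma double_sin (x : ℝ) : Real.sin x = 2 * Real.sin (x/2) * Real.cos (x/2) := by
  rw [show x = 2*(x/2) by ring, Real.sin_two_mul]
  ring_nf

private lemma double_cos (x : ℝ) : Real.cos x = 2 * Real.cos (x/2)^2 - 1 := by
  rw [show x = 2*(x/2) by ring, Real.cos_two_mul]
  ring_nf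

private lemma kpp_pos {θ : ℝ} (h : θ ∈ Set.Ioo 0 (2*π)) :
    0 < 2 - 2 * Real.cos θ - θ * Real.sin θ := by
  have hN := N_neg h
  have hs := sin_half_pos h
  have h1 := double_sin θ
  have h2 := double_cos θ
  have pyth := Real.sin_sq_add_cos_sq (θ/2)
  rw [h1, h2]
  nlinarith [mul_pos hs (neg_pos.mpr hN)]

private lemma hasDerivAt_kp (x : ℝ) :
    HasDerivAt (fun y : ℝ => 2*y + y * Real.cos y - 3 * Real.sin y)
      (2 - 2 * Real.cos x - x * Real.sin x) x := by
  have := (((hasDerivAt_id x).const_mul 2).add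
      ((hasDerivAt_id x).mul (Real.hasDerivAt_cos x))).sub
      ((Real.hasDerivAt_sin x).const_mul 3)
  refine this.congr_deriv ?_
  simp; ring

private lemma kp_pos {θ : ℝ} (h : θ ∈ Set.Ioo 0 (2*π)) :
    0 < 2*θ + θ * Real.cos θ - 3 * Real.sin θ := by
  have pi_pos := Real.pi_pos
  have mono : StrictMonoOn (fun y : ℝ => 2*y + y * Real.cos y - 3 * Real.sin y)
      (Set.Icc 0 (2*π)) := by
    apply strictMonoOn_of_deriv_pos (convex_Icc _ _)
    · fun_prop
    · intro x hx
      rw [interior_Icc] at hx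
      rw [(hasDerivAt_kp x).deriv]
      exact kpp_pos hx
  have h0 : (0:ℝ) ∈ Set.Icc 0 (2*π) := left_mem_Icc.mpr (by linarith)
  have hθ : θ ∈ Set.Icc 0 (2*π) := ⟨le_of_lt h.1, le_of_lt h.2⟩
  have := mono h0 hθ h.1
  simpa using this

private lemma hasDerivAt_k (x : ℝ) :
    HasDerivAt (fun y : ℝ => y^2 + y * Real.sin y + 4 * Real.cos y - 4)
      (2*x + x * Real.cos x - 3 * Real.sin x) x := by
  have := (((hasDerivAt_pow 2 x).add
      ((hasDerivAt_id x).mul (Real.hasDerivAt_sin x))).add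
      ((Real.hasDerivAt_cos x).const_mul 4)).sub (hasDerivAt_const x 4)
  refine this.congr_deriv ?_
  simp; ring

private lemma k_pos {θ : ℝ} (h : θ ∈ Set.Ioo 0 (2*π)) :
    0 < θ^2 + θ * Real.sin θ + 4 * Real.cos θ - 4 := by
  have pi_pos := Real.pi_pos
  have mono : StrictMonoOn (fun y : ℝ => y^2 + y * Real.sin y + 4 * Real.cos y - 4)
      (Set.Icc 0 (2*π)) := by
    apply strictMonoOn_of_deriv_pos (convex_Icc _ _)
    · fun_prop
    · intro x hx
      rw [interior_Icc] at hx
      rw [(hasDerivAt_k x).deriv]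
      exact kp_pos hx
  have h0 : (0:ℝ) ∈ Set.Icc 0 (2*π) := left_mem_Icc.mpr (by linarith)
  have hθ : θ ∈ Set.Icc 0 (2*π) := ⟨le_of_lt h.1, le_of_lt h.2⟩
  have := mono h0 hθ h.1
  simpa using this

private lemma D_pos {θ : ℝ} (h : θ ∈ Set.Ioo 0 (2*π)) : 0 < θ - Real.sin θ :=
  sub_pos.mpr (Real.sin_lt h.1)

private lemma one_sub_cos_pos {θ : ℝ} (h : θ ∈ Set.Ioo 0 (2*π)) : 0 < 1 - Real.cos θ := by
  have hs := sin_half_pos h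
  have h2 := double_cos θ
  have pyth := Real.sin_sq_add_cos_sq (θ/2)
  nlinarith [mul_pos hs hs]

private lemma hasDerivAt_D (x : ℝ) :
    HasDerivAt (fun y : ℝ => y - Real.sin y) (1 - Real.cos x) x :=
  (hasDerivAt_id x).sub (Real.hasDerivAt_sin x)

theorem A_B_monotonicity :
    (∀ θ ∈ Set.Ioo (0:ℝ) (2*π),
      0 < -((θ*Real.cos (θ/2) - 2*Real.sin (θ/2))/(θ - Real.sin θ))) ∧
    StrictMonoOn
      (fun θ : ℝ => -((θ*Real.cos (θ/2) - 2*Real.sin (θ/2))/(θ - Real.sin θ)))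
      (Set.Ioo 0 (2*π)) ∧
    (∀ θ ∈ Set.Ioo (0:ℝ) (2*π),
      0 < (1 - Real.cos θ)/(θ - Real.sin θ)) ∧
    StrictAntiOn (fun θ : ℝ => (1 - Real.cos θ)/(θ - Real.sin θ))
      (Set.Ioo 0 (2*π)) := by
  refine ⟨?_, ?_, ?_, ?_⟩
  · intro θ h
    have hD := D_pos h
    have hN := N_neg h
    rw [neg_pos]
    exact div_neg_of_neg_of_pos hN hD
  · apply strictMonoOn_of_deriv_pos (convex_Ioo _ _)
    · apply ContinuousOn.neg
      apply ContinuousOn.div (by fun_prop) (by fun_prop)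
      intro x hx
      exact ne_of_gt (D_pos hx)
    · intro x hx
      rw [interior_Ioo] at hx
      have hD := D_pos hx
      have hD0 : (x - Real.sin x) ≠ 0 := ne_of_gt hD
      have hder := ((hasDerivAt_N x).div (hasDerivAt_D x) hD0).neg
      rw [show deriv (fun θ : ℝ => -((θ*Real.cos (θ/2) - 2*Real.sin (θ/2))/(θ - Real.sin θ))) x = _ from hder.deriv]
      rw [neg_pos]
      apply div_neg_of_neg_of_pos _ (by positivity)
      -- numerator < 0
      have hs := sin_half_pos hx
      have hk := k_pos hx
      have h1 := double_sin x
      have h2 := double_cos x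
      have key : -(x/2) * Real.sin (x/2) * (x - Real.sin x) -
          (x * Real.cos (x/2) - 2 * Real.sin (x/2)) * (1 - Real.cos x) =
          -(Real.sin (x/2) * (x^2 + x * Real.sin x + 4 * Real.cos x - 4)) / 2 := by
        rw [h1, h2]
        linear_combination (2*x*Real.cos (x/2)) * Real.sin_sq_add_cos_sq (x/2)
      rw [key]
      have := mul_pos hs hk
      linarith
  · intro θ h
    exact div_pos (one_sub_cos_pos h) (D_pos h)
  · apply strictAntiOn_of_deriv_neg (convex_Ioo _ _)
    · apply ContinuousOn.div (by fun_prop) (by fun_prop)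
      intro x hx
      exact ne_of_gt (D_pos hx)
    · intro x hx
      rw [interior_Ioo] at hx
      have hD := D_pos hx
      have hD0 : (x - Real.sin x) ≠ 0 := ne_of_gt hD
      have hnum : HasDerivAt (fun y : ℝ => 1 - Real.cos y) (Real.sin x) x := by
        have := (hasDerivAt_const x (1:ℝ)).sub (Real.hasDerivAt_cos x)
        refine this.congr_deriv ?_; ring
      have hder := hnum.div (hasDerivAt_D x) hD0
      rw [show deriv (fun θ : ℝ => (1 - Real.cos θ)/(θ - Real.sin θ)) x = _ from hder.deriv]
      apply div_neg_of_neg_of_pos _ (by positivity)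
      have hs := sin_half_pos hx
      have hN := N_neg hx
      have h1 := double_sin x
      have h2 := double_cos x
      have key : Real.sin x * (x - Real.sin x) - (1 - Real.cos x) * (1 - Real.cos x) =
          2 * Real.sin (x/2) * (x * Real.cos (x/2) - 2 * Real.sin (x/2)) := by
        rw [h1, h2]
        linear_combination (4*(1 - Real.cos (x/2)^2)) * Real.sin_sq_add_cos_sq (x/2)
      rw [key]
      nlinarith [mul_pos hs (neg_pos.mpr hN)]
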